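/- Let N be a positive integer and t > -log N. For all n ≥ N, (1/24)∫_{n+1}^∞ dx/(x^2(t+log x)^2) ≤ η(t,N) - η_{n-1}(t,N) ≤ (1/24)∫_n^∞ dx/(x^2(t+log x)^2), where η_n(t,N) = Σ_{k=N}^n (1/(t+log(k+1/2)) - 1/(H_k - γ + t)) and η(t,N) = lim_{m→∞} η_m(t,N). -/

import Mathlib

section EtaDef
open Real Filter MeasureTheory Finset Topology

/-- The sequence `η_n(t,N) = Σ_{k=N}^n (1/(t+log(k+1/2)) - 1/(H_k - γ + t))`. -/
noncomputable def eta (N : ℕ) (t : ℝ) (n : ℕ) : ℝ :=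
  ∑ k ∈ Finset.Icc N n,
    (1 / (t + Real.log ((k : ℝ) + 1/2)) -
      1 / ((harmonic k : ℝ) - Real.eulerMascheroniConstant + t))

end EtaDef

section Aux
open Real Set Filter Topology MeasureTheory


lemma my_log_ratio_lower {u : ℝ} (h0 : 0 ≤ u) (h1 : u < 1) :
    2*u + 2*u^3/3 ≤ Real.log (1+u) - Real.log (1-u) := by
  set F : ℝ → ℝ := fun x => Real.log (1+x) - Real.log (1-x) - 2*x - 2*x^3/3 with hF
  have key : ∀ x ∈ Ioo (-1:ℝ) 1, HasDerivAt F (1/(1+x) + 1/(1-x) - 2 - 2*x^2) x := by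
    intro x hx
    have hx1 : (0:ℝ) < 1 + x := by linarith [hx.1]
    have hx2 : (0:ℝ) < 1 - x := by linarith [hx.2]
    have d1 : HasDerivAt (fun x : ℝ => Real.log (1+x)) (1/(1+x)) x := by
      simpa using (((hasDerivAt_id x).const_add 1).log hx1.ne')
    have d2 : HasDerivAt (fun x : ℝ => Real.log (1-x)) ((-1)/(1-x)) x := by
      simpa using (((hasDerivAt_id x).const_sub 1).log hx2.ne')
    have d3 : HasDerivAt (fun x : ℝ => 2*x) 2 x := by
      simpa using (hasDerivAt_id x).const_mul 2
    have d4 : HasDerivAt (fun x : ℝ => 2*x^3/3) (2*x^2) x := by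
      have := ((hasDerivAt_pow 3 x).const_mul 2).div_const 3
      refine this.congr_deriv ?_; ring
    have := ((d1.sub d2).sub d3).sub d4
    refine this.congr_deriv ?_
    field_simp
    ring
  have hmono : MonotoneOn F (Icc 0 u) := by
    apply monotoneOn_of_deriv_nonneg (convex_Icc 0 u)
    · intro x hx
      exact ((key x ⟨by linarith [hx.1], lt_of_le_of_lt hx.2 h1⟩).continuousAt).continuousWithinAt
    · intro x hx
      rw [interior_Icc] at hx
      exact ((key x ⟨by linarith [hx.1], lt_of_lt_of_le hx.2 (le_of_lt h1)⟩).differentiableAt).differentiableWithinAt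
    · intro x hx
      rw [interior_Icc] at hx
      have hx' : x ∈ Ioo (-1:ℝ) 1 := ⟨by linarith [hx.1], lt_of_lt_of_le hx.2 (le_of_lt h1)⟩
      rw [(key x hx').deriv]
      have hx1 : (0:ℝ) < 1 + x := by linarith [hx'.1]
      have hx2 : (0:ℝ) < 1 - x := by linarith [hx'.2]
      have : 1/(1+x) + 1/(1-x) - 2 - 2*x^2 = 2*x^4/((1+x)*(1-x)) := by
        field_simp; ring
      rw [this]; positivity
  have h0' : F 0 = 0 := by simp [hF]
  have := hmono (left_mem_Icc.mpr h0) (right_mem_Icc.mpr h0) h0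
  rw [h0'] at this
  simp only [hF] at this
  linarith

lemma my_log_ratio_upper {u : ℝ} (h0 : 0 ≤ u) (h1 : u < 1) :
    Real.log (1+u) - Real.log (1-u) ≤ 2*u + 2*u^3/(3*(1-u^2)^2) := by
  set F : ℝ → ℝ := fun x => 2*x + 2*x^3/(3*(1-x^2)^2) - (Real.log (1+x) - Real.log (1-x)) with hF
  have key : ∀ x ∈ Ioo (-1:ℝ) 1, HasDerivAt F
      (2 + (6*x^2*(3*(1-x^2)^2) - 2*x^3*(3*(2*(1-x^2)*(-2*x))))/(3*(1-x^2)^2)^2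
        - (1/(1+x) + 1/(1-x))) x := by
    intro x hx
    have hx1 : (0:ℝ) < 1 + x := by linarith [hx.1]
    have hx2 : (0:ℝ) < 1 - x := by linarith [hx.2]
    have hxs : (0:ℝ) < 1 - x^2 := by nlinarith [hx.1, hx.2]
    have d1 : HasDerivAt (fun x : ℝ => Real.log (1+x)) (1/(1+x)) x := by
      simpa using (((hasDerivAt_id x).const_add 1).log hx1.ne')
    have d2 : HasDerivAt (fun x : ℝ => Real.log (1-x)) ((-1)/(1-x)) x := by
      simpa using (((hasDerivAt_id x).const_sub 1).log hx2.ne')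
    have d3 : HasDerivAt (fun x : ℝ => 2*x) 2 x := by
      simpa using (hasDerivAt_id x).const_mul 2
    have dnum : HasDerivAt (fun x : ℝ => 2*x^3) (6*x^2) x := by
      have := (hasDerivAt_pow 3 x).const_mul 2
      refine this.congr_deriv ?_; ring
    have dden : HasDerivAt (fun x : ℝ => 3*(1-x^2)^2) (3*(2*(1-x^2)*(-2*x))) x := by
      have hinner : HasDerivAt (fun x : ℝ => 1 - x^2) (-2*x) x := by
        have := (hasDerivAt_pow 2 x).const_sub 1
        refine this.congr_deriv ?_; ring
      have := (hinner.pow 2).const_mul 3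
      refine this.congr_deriv ?_; ring
    have hden_ne : 3*(1-x^2)^2 ≠ 0 := by positivity
    have d4 := dnum.div dden hden_ne
    have := (d3.add d4).sub (d1.sub d2)
    refine this.congr_deriv ?_
    ring
  have hmono : MonotoneOn F (Icc 0 u) := by
    apply monotoneOn_of_deriv_nonneg (convex_Icc 0 u)
    · intro x hx
      exact ((key x ⟨by linarith [hx.1], lt_of_le_of_lt hx.2 h1⟩).continuousAt).continuousWithinAt
    · intro x hx
      rw [interior_Icc] at hx
      exact ((key x ⟨by linarith [hx.1], lt_of_lt_of_le hx.2 (le_of_lt h1)⟩).differentiableAt).differentiableWithinAt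
    · intro x hx
      rw [interior_Icc] at hx
      have hx' : x ∈ Ioo (-1:ℝ) 1 := ⟨by linarith [hx.1], lt_of_lt_of_le hx.2 (le_of_lt h1)⟩
      rw [(key x hx').deriv]
      have hx1 : (0:ℝ) < 1 + x := by linarith [hx'.1]
      have hx2 : (0:ℝ) < 1 - x := by linarith [hx'.2]
      have hxs : (0:ℝ) < 1 - x^2 := by nlinarith
      have : 2 + (6*x^2*(3*(1-x^2)^2) - 2*x^3*(3*(2*(1-x^2)*(-2*x))))/(3*(1-x^2)^2)^2
          - (1/(1+x) + 1/(1-x)) = 2*x^4*(7-3*x^2)/(3*(1-x^2)^3) := by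
        have e1 : (1+x)*(1-x) = 1 - x^2 := by ring
        field_simp
        ring
      rw [this]
      have : (0:ℝ) < 7 - 3*x^2 := by nlinarith
      positivity
  have h0' : F 0 = 0 := by simp [hF]
  have := hmono (left_mem_Icc.mpr h0) (right_mem_Icc.mpr h0) h0
  rw [h0'] at this
  simp only [hF] at this
  linarith


lemma my_c_lower {m : ℝ} (hm : 1 ≤ m) :
    1/(24*m^2) - 1/(24*(m+1)^2) ≤ Real.log (m+1/2) - Real.log (m-1/2) - 1/m := by
  have hm0 : (0:ℝ) < m := by linarith
  set u : ℝ := 1/(2*m) with hu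
  have hu0 : 0 ≤ u := by positivity
  have hu1 : u < 1 := by rw [hu, div_lt_one (by linarith)]; linarith
  have e1 : m + 1/2 = m * (1+u) := by rw [hu]; field_simp
  have e2 : m - 1/2 = m * (1-u) := by rw [hu]; field_simp
  have l1 : Real.log (m+1/2) = Real.log m + Real.log (1+u) := by
    rw [e1, Real.log_mul hm0.ne' (by linarith)]
  have l2 : Real.log (m-1/2) = Real.log m + Real.log (1-u) := by
    rw [e2, Real.log_mul hm0.ne' (by nlinarith)]
  have key := my_log_ratio_lower hu0 hu1
  rw [l1, l2]
  have h2u : 2*u = 1/m := by rw [hu]; field_simp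
  have h2u3 : 2*u^3/3 = 1/(12*m^3) := by rw [hu]; field_simp; ring
  have halg : 1/(24*m^2) - 1/(24*(m+1)^2) ≤ 1/(12*m^3) := by
    rw [div_sub_div _ _ (by positivity) (by positivity),
      div_le_div_iff₀ (by positivity) (by positivity)]
    nlinarith
  calc 1/(24*m^2) - 1/(24*(m+1)^2) ≤ 1/(12*m^3) := halg
    _ = 2*u + 2*u^3/3 - 1/m := by rw [h2u, h2u3]; ring
    _ ≤ Real.log m + Real.log (1+u) - (Real.log m + Real.log (1-u)) - 1/m := by linarith

lemma my_c_upper {m : ℝ} (hm : 1 ≤ m) :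
    Real.log (m+1/2) - Real.log (m-1/2) - 1/m ≤ 1/(24*(m-1/2)^2) - 1/(24*(m+1/2)^2) := by
  have hm0 : (0:ℝ) < m := by linarith
  set u : ℝ := 1/(2*m) with hu
  have hu0 : 0 ≤ u := by positivity
  have hu1 : u < 1 := by rw [hu, div_lt_one (by linarith)]; linarith
  have e1 : m + 1/2 = m * (1+u) := by rw [hu]; field_simp
  have e2 : m - 1/2 = m * (1-u) := by rw [hu]; field_simp
  have l1 : Real.log (m+1/2) = Real.log m + Real.log (1+u) := by
    rw [e1, Real.log_mul hm0.ne' (by linarith)]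
  have l2 : Real.log (m-1/2) = Real.log m + Real.log (1-u) := by
    rw [e2, Real.log_mul hm0.ne' (by nlinarith)]
  have key := my_log_ratio_upper hu0 hu1
  rw [l1, l2]
  have h2u : 2*u = 1/m := by rw [hu]; field_simp
  have hu1' : (0:ℝ) < 1 - u^2 := by nlinarith
  have halg : 2*u^3/(3*(1-u^2)^2) = 1/(24*(m-1/2)^2) - 1/(24*(m+1/2)^2) := by
    have h1 : (0:ℝ) < 24*(m-1/2)^2 := by nlinarith
    have h2 : (0:ℝ) < 24*(m+1/2)^2 := by positivity
    have h3 : (0:ℝ) < 3*(1-u^2)^2 := by positivity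
    rw [div_sub_div _ _ h1.ne' h2.ne', div_eq_div_iff h3.ne' (by positivity)]
    rw [hu]
    field_simp
    ring
  linarith


noncomputable def dd (n : ℕ) : ℝ := (harmonic n : ℝ) - Real.log ((n:ℝ) + 1/2)

lemma dd_step (n : ℕ) : dd n - dd (n+1) =
    Real.log (((n:ℝ)+1)+1/2) - Real.log (((n:ℝ)+1)-1/2) - 1/((n:ℝ)+1) := by
  unfold dd
  rw [harmonic_succ]
  push_cast
  have : ((n:ℝ)+1)-1/2 = (n:ℝ)+1/2 := by ring
  rw [this]
  ring

lemma dd_bounds (k : ℕ) : ∀ n : ℕ, k ≤ n →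
    1/(24*((k:ℝ)+1)^2) - 1/(24*((n:ℝ)+1)^2) ≤ dd k - dd n ∧
    dd k - dd n ≤ 1/(24*((k:ℝ)+1/2)^2) - 1/(24*((n:ℝ)+1/2)^2) := by
  intro n hn
  induction n, hn using Nat.le_induction with
  | base => constructor <;> simp
  | succ n hn ih =>
    have hm : (1:ℝ) ≤ (n:ℝ)+1 := by
      have : (0:ℝ) ≤ (n:ℝ) := Nat.cast_nonneg n
      linarith
    have hc1 := my_c_lower hm
    have hc2 := my_c_upper hm
    have hstep := dd_step n
    have e1 : ((n:ℝ)+1)+1 = ((n+1:ℕ):ℝ)+1 := by push_cast; ring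
    have e2 : ((n:ℝ)+1)+1/2 = ((n+1:ℕ):ℝ)+1/2 := by push_cast; ring
    have e3 : ((n:ℝ)+1)-1/2 = (n:ℝ)+1/2 := by ring
    rw [e3] at hstep
    constructor
    · have := ih.1
      rw [e3] at hc1
      push_cast at hc1 ⊢
      linarith [hstep, hc1, this]
    · have := ih.2
      rw [e3] at hc2
      push_cast at hc2 ⊢
      linarith [hstep, hc2, this]

lemma dd_tendsto : Tendsto dd atTop (𝓝 Real.eulerMascheroniConstant) := by
  have h0 : Tendsto (fun n : ℕ => 1 + 1/(2*(n:ℝ))) atTop (𝓝 1) := by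
    have : Tendsto (fun n : ℕ => 1/(2*(n:ℝ))) atTop (𝓝 0) := by
      have := tendsto_one_div_atTop_nhds_zero_nat.const_mul (1/2 : ℝ)
      simp only [mul_zero] at this
      convert this using 2 with n
      field_simp
    simpa using tendsto_const_nhds.add this
  have hlog : Tendsto (fun n : ℕ => Real.log (1 + 1/(2*(n:ℝ)))) atTop (𝓝 0) := by
    have := ((Real.continuousAt_log one_ne_zero).tendsto).comp h0
    simpa [Function.comp_def] using this
  have key : Tendsto (fun n : ℕ => Real.eulerMascheroniSeq' n - Real.log (1 + 1/(2*(n:ℝ))))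
      atTop (𝓝 Real.eulerMascheroniConstant) := by
    simpa using Real.tendsto_eulerMascheroniSeq'.sub hlog
  apply key.congr'
  filter_upwards [eventually_ge_atTop 1] with n hn
  have hn0 : (0:ℝ) < (n:ℝ) := by exact_mod_cast hn
  have hne : n ≠ 0 := by omega
  have : Real.eulerMascheroniSeq' n = (harmonic n : ℝ) - Real.log n := by
    simp [Real.eulerMascheroniSeq', hne]
  rw [this, dd]
  have : Real.log ((n:ℝ) + 1/2) = Real.log n + Real.log (1 + 1/(2*(n:ℝ))) := by
    rw [← Real.log_mul hn0.ne' (by positivity)]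
    congr 1
    field_simp
  rw [this]
  ring

lemma sq_inv_tendsto (c : ℝ) : Tendsto (fun n : ℕ => 1/(24*((n:ℝ)+c)^2)) atTop (𝓝 0) := by
  apply squeeze_zero' (g := fun n : ℕ => 1/(n:ℝ))
  · filter_upwards [eventually_ge_atTop (Nat.ceil (2*|c|+1))] with n hn
    positivity
  · filter_upwards [eventually_ge_atTop (Nat.ceil (2*|c|+1))] with n hn
    have h1 : (2*|c|+1 : ℝ) ≤ (n:ℝ) := le_trans (Nat.le_ceil _) (Nat.cast_le.mpr hn)
    have h2 : -|c| ≤ c := neg_abs_le c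
    have h3 : c ≤ |c| := le_abs_self c
    have hn0 : (0:ℝ) < n := by nlinarith [abs_nonneg c]
    apply one_div_le_one_div_of_le hn0
    nlinarith [abs_nonneg c]
  · exact tendsto_one_div_atTop_nhds_zero_nat

lemma deTemple_lower (k : ℕ) :
    1/(24*((k:ℝ)+1)^2) ≤ (harmonic k : ℝ) - Real.eulerMascheroniConstant
      - Real.log ((k:ℝ)+1/2) := by
  have h1 : Tendsto (fun n : ℕ => dd k - dd n) atTop (𝓝 (dd k - Real.eulerMascheroniConstant)) :=
    tendsto_const_nhds.sub dd_tendsto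
  have h2 : Tendsto (fun n : ℕ => 1/(24*((k:ℝ)+1)^2) - 1/(24*((n:ℝ)+1)^2)) atTop
      (𝓝 (1/(24*((k:ℝ)+1)^2) - 0)) := tendsto_const_nhds.sub (sq_inv_tendsto 1)
  have h3 : 1/(24*((k:ℝ)+1)^2) - 0 ≤ dd k - Real.eulerMascheroniConstant := by
    apply le_of_tendsto_of_tendsto h2 h1
    filter_upwards [eventually_ge_atTop k] with n hn
    exact (dd_bounds k n hn).1
  have : dd k = (harmonic k : ℝ) - Real.log ((k:ℝ)+1/2) := rfl
  linarith

lemma deTemple_upper (k : ℕ) :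
    (harmonic k : ℝ) - Real.eulerMascheroniConstant - Real.log ((k:ℝ)+1/2)
      ≤ 1/(24*((k:ℝ)+1/2)^2) := by
  have h1 : Tendsto (fun n : ℕ => dd k - dd n) atTop (𝓝 (dd k - Real.eulerMascheroniConstant)) :=
    tendsto_const_nhds.sub dd_tendsto
  have h2 : Tendsto (fun n : ℕ => 1/(24*((k:ℝ)+1/2)^2) - 1/(24*((n:ℝ)+1/2)^2)) atTop
      (𝓝 (1/(24*((k:ℝ)+1/2)^2) - 0)) := tendsto_const_nhds.sub (sq_inv_tendsto (1/2))
  have h3 : dd k - Real.eulerMascheroniConstant ≤ 1/(24*((k:ℝ)+1/2)^2) - 0 := by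
    apply le_of_tendsto_of_tendsto h1 h2
    filter_upwards [eventually_ge_atTop k] with n hn
    exact (dd_bounds k n hn).2
  have : dd k = (harmonic k : ℝ) - Real.log ((k:ℝ)+1/2) := rfl
  linarith


noncomputable def gg (t : ℝ) (x : ℝ) : ℝ := 1 / (x ^ 2 * (t + Real.log x) ^ 2)

lemma gg_nonneg (t x : ℝ) : 0 ≤ gg t x := by unfold gg; positivity

section
variable {t c : ℝ}

lemma pos_aux (hc1 : 1 ≤ c) (hlc : 0 < t + Real.log c) {x : ℝ} (hx : c ≤ x) : 0 < t + Real.log x := by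
  have := Real.log_le_log (by linarith) hx
  linarith

lemma gg_cont (hc1 : 1 ≤ c) (hlc : 0 < t + Real.log c) : ContinuousOn (gg t) (Ici c) := by
  apply ContinuousOn.div continuousOn_const
  · apply ContinuousOn.mul
    · exact (continuous_pow 2).continuousOn
    · apply ContinuousOn.pow
      apply ContinuousOn.add continuousOn_const
      apply Real.continuousOn_log.mono
      intro x hx
      simp only [mem_compl_iff, mem_singleton_iff]
      intro h; rw [h] at hx; simp only [mem_Ici] at hx; linarith
  · intro x hx
    simp only [mem_Ici] at hx
    have h1 : (0:ℝ) < x := by linarith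
    have h2 := pos_aux hc1 hlc hx
    positivity

lemma gg_anti (hc1 : 1 ≤ c) (hlc : 0 < t + Real.log c) {x y : ℝ} (hx : c ≤ x) (hxy : x ≤ y) : gg t y ≤ gg t x := by
  have h0x : (0:ℝ) < x := by linarith
  have h0y : (0:ℝ) < y := by linarith
  have hlx := pos_aux hc1 hlc hx
  have hly := pos_aux hc1 hlc (le_trans hx hxy)
  unfold gg
  apply one_div_le_one_div_of_le
  · positivity
  · have h1 : Real.log x ≤ Real.log y := Real.log_le_log h0x hxy
    have h2 : x^2 ≤ y^2 := by nlinarith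
    have h3 : (t + Real.log x)^2 ≤ (t + Real.log y)^2 := by nlinarith
    nlinarith [sq_nonneg x, sq_nonneg (t + Real.log x)]

lemma gg_intervalIntegrable (hc1 : 1 ≤ c) (hlc : 0 < t + Real.log c) {a b : ℝ}
    (ha : c ≤ a) (hab : a ≤ b) : IntervalIntegrable (gg t) volume a b := by
  apply ContinuousOn.intervalIntegrable
  apply (gg_cont hc1 hlc).mono
  rw [uIcc_of_le hab]
  exact fun x hx => le_trans ha hx.1

lemma gg_integrableOn (hc1 : 1 ≤ c) (hlc : 0 < t + Real.log c) {p : ℝ} (hp : c ≤ p) : IntegrableOn (gg t) (Ioi p) := by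
  have hp0 : (0:ℝ) < p := by linarith
  have hmaj : IntegrableOn (fun x : ℝ => (1/(t + Real.log c)^2) * x ^ (-2:ℝ)) (Ioi p) :=
    (integrableOn_Ioi_rpow_of_lt (by norm_num) hp0).const_mul _
  apply Integrable.mono' hmaj
  · exact ((gg_cont hc1 hlc).mono (fun x hx => le_trans hp (le_of_lt hx))).aestronglyMeasurable
      measurableSet_Ioi
  · rw [ae_restrict_iff' measurableSet_Ioi]
    filter_upwards with x hx
    simp only [mem_Ioi] at hx
    have hcx : c ≤ x := le_trans hp hx.le
    have h0x : (0:ℝ) < x := by linarith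
    have hlx := pos_aux hc1 hlc hcx
    have hlog : Real.log c ≤ Real.log x := Real.log_le_log (by linarith) hcx
    rw [Real.norm_of_nonneg (gg_nonneg t x)]
    rw [Real.rpow_neg h0x.le, show ((2:ℝ) = ((2:ℕ):ℝ)) by norm_num, Real.rpow_natCast]
    unfold gg
    rw [div_mul_eq_mul_div, one_mul, div_le_div_iff₀ (by positivity) (by positivity)]
    have h1 : (t + Real.log c)^2 ≤ (t + Real.log x)^2 := by nlinarith
    have h2 : (x^2)⁻¹ * (x^2 * (t + Real.log x)^2) = (t + Real.log x)^2 := by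
      field_simp
    linarith

lemma gg_midpoint (hc1 : 1 ≤ c) (hlc : 0 < t + Real.log c) {p : ℝ} (hp : c ≤ p) :
    gg t (p + 1/2) ≤ ∫ x in p..(p+1), gg t x := by
  set m := p + 1/2 with hm
  have hint1 : IntervalIntegrable (gg t) volume p m :=
    gg_intervalIntegrable hc1 hlc hp (by rw [hm]; linarith)
  have hint2 : IntervalIntegrable (gg t) volume m (p+1) :=
    gg_intervalIntegrable hc1 hlc (by rw [hm]; linarith) (by rw [hm]; linarith)
  have hrefl : ∫ x in p..m, gg t x = ∫ x in m..(p+1), gg t (2*m - x) := by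
    have := intervalIntegral.integral_comp_sub_left (a := m) (b := p+1) (gg t) (2*m)
    rw [show 2*m-(p+1) = p by rw [hm]; ring, show 2*m - m = m by ring] at this
    exact this.symm
  have hcomp_cont : ContinuousOn (fun x => gg t (2*m - x)) (Icc m (p+1)) := by
    apply (gg_cont hc1 hlc).comp ((continuous_const.sub continuous_id).continuousOn)
    intro x hx
    simp only [mem_Icc] at hx
    simp only [mem_Ici, id_eq]
    rw [hm] at hx
    have h1 := hx.1
    have h2 := hx.2
    simp only [hm, Pi.sub_apply, id_eq]
    linarith
  have hint3 : IntervalIntegrable (fun x => gg t (2*m - x)) volume m (p+1) := by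
    apply ContinuousOn.intervalIntegrable
    rwa [uIcc_of_le (by rw [hm]; linarith)]
  have key : ∀ x ∈ Icc m (p+1), 2 * gg t m ≤ gg t (2*m - x) + gg t x := by
    intro x hx
    simp only [mem_Icc] at hx
    set y := 2*m - x with hy
    have hxc : c ≤ x := by simp only [hm] at hx; linarith [hx.1]
    have hyc : c ≤ y := by simp only [hy, hm] at hx ⊢; linarith [hx.2]
    have hmc : c ≤ m := by rw [hm]; linarith
    have h0x : (0:ℝ) < x := by linarith
    have h0y : (0:ℝ) < y := by linarith
    have h0m : (0:ℝ) < m := by linarith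
    have hlx := pos_aux hc1 hlc hxc
    have hly := pos_aux hc1 hlc hyc
    have hlm := pos_aux hc1 hlc hmc
    have hxy : y * x ≤ m^2 := by simp only [hy]; nlinarith [sq_nonneg (x - m)]
    have hlxy : Real.log y + Real.log x ≤ 2 * Real.log m := by
      have e1 : Real.log (y*x) = Real.log y + Real.log x := Real.log_mul h0y.ne' h0x.ne'
      have e2 : Real.log (m^2) = 2 * Real.log m := by
        rw [show m^2 = m*m by ring, Real.log_mul h0m.ne' h0m.ne']; ring
      have := Real.log_le_log (by positivity) hxy
      rw [e1, e2] at this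
      exact this
    have hprod : (t + Real.log y) * (t + Real.log x) ≤ (t + Real.log m)^2 := by
      nlinarith [sq_nonneg (Real.log x - Real.log y)]
    have eX : gg t x = (1/(x*(t + Real.log x)))^2 := by
      unfold gg; rw [div_pow]; congr 1 <;> ring
    have eY : gg t y = (1/(y*(t + Real.log y)))^2 := by
      unfold gg; rw [div_pow]; congr 1 <;> ring
    have eM : gg t m = (1/(m*(t + Real.log m)))^2 := by
      unfold gg; rw [div_pow]; congr 1 <;> ring
    set A := 1/(x*(t + Real.log x)) with hA
    set B := 1/(y*(t + Real.log y)) with hB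
    set C := 1/(m*(t + Real.log m)) with hC
    have hA0 : 0 < A := by rw [hA]; positivity
    have hB0 : 0 < B := by rw [hB]; positivity
    have hC0 : 0 < C := by rw [hC]; positivity
    have hCAB : C^2 ≤ A * B := by
      rw [hA, hB, hC]
      rw [div_mul_div_comm, one_mul]
      rw [div_pow, one_pow]
      apply div_le_div_of_nonneg_left (by norm_num) (by positivity)
      calc x*(t + Real.log x)*(y*(t + Real.log y))
          = (y*x) * ((t + Real.log y)*(t + Real.log x)) := by ring
        _ ≤ m^2 * (t + Real.log m)^2 := by
            apply mul_le_mul hxy hprod (by positivity) (by positivity)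
        _ = (m*(t + Real.log m))^2 := by ring
    rw [eX, eY, eM]
    nlinarith [sq_nonneg (A - B)]
  calc gg t (p + 1/2) = (1/2) * (2 * gg t m) := by rw [hm]; ring
    _ = ∫ _ in m..(p+1), 2 * gg t m := by
        rw [intervalIntegral.integral_const, smul_eq_mul]
        congr 1
        rw [hm]; ring
    _ ≤ ∫ x in m..(p+1), (gg t (2*m - x) + gg t x) := by
        apply intervalIntegral.integral_mono_on (by rw [hm]; linarith)
          (intervalIntegrable_const) (hint3.add hint2)
        exact key
    _ = (∫ x in m..(p+1), gg t (2*m - x)) + ∫ x in m..(p+1), gg t x :=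
        intervalIntegral.integral_add hint3 hint2
    _ = (∫ x in p..m, gg t x) + ∫ x in m..(p+1), gg t x := by rw [hrefl]
    _ = ∫ x in p..(p+1), gg t x :=
        intervalIntegral.integral_add_adjacent_intervals hint1 hint2

lemma gg_interval_le (hc1 : 1 ≤ c) (hlc : 0 < t + Real.log c) {p : ℝ} (hp : c ≤ p) :
    ∫ x in p..(p+1), gg t x ≤ gg t p := by
  calc ∫ x in p..(p+1), gg t x ≤ ∫ _ in p..(p+1), gg t p := by
        apply intervalIntegral.integral_mono_on (by linarith)
          (gg_intervalIntegrable hc1 hlc hp (by linarith)) intervalIntegrable_const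
        intro x hx
        exact gg_anti hc1 hlc hp hx.1
    _ = gg t p := by rw [intervalIntegral.integral_const, smul_eq_mul]; ring

end

lemma sandwich {N : ℕ} (hN : 0 < N) {t : ℝ} (ht : -Real.log N < t) {k : ℕ} (hk : N ≤ k) :
    (1/24) * ∫ x in ((k:ℝ)+1)..((k:ℝ)+2), gg t x ≤
      1 / (t + Real.log ((k : ℝ) + 1/2)) -
        1 / ((harmonic k : ℝ) - Real.eulerMascheroniConstant + t) ∧
    1 / (t + Real.log ((k : ℝ) + 1/2)) -
        1 / ((harmonic k : ℝ) - Real.eulerMascheroniConstant + t) ≤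
      (1/24) * ∫ x in (k:ℝ)..((k:ℝ)+1), gg t x := by
  have hc1 : (1:ℝ) ≤ (N:ℝ) := by exact_mod_cast hN
  have hlc : 0 < t + Real.log N := by linarith
  have hkc : (N:ℝ) ≤ (k:ℝ) := by exact_mod_cast hk
  have hk1 : (1:ℝ) ≤ (k:ℝ) := le_trans hc1 hkc
  set bk := Real.log ((k:ℝ)+1/2) with hbkdef
  set ak := (harmonic k : ℝ) - Real.eulerMascheroniConstant with hakdef
  have hdl : 1/(24*((k:ℝ)+1)^2) ≤ ak - bk := by
    have := deTemple_lower k; rw [hakdef, hbkdef]; linarith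
  have hdu : ak - bk ≤ 1/(24*((k:ℝ)+1/2)^2) := by
    have := deTemple_upper k; rw [hakdef, hbkdef]; linarith
  have htbk : 0 < t + bk := pos_aux hc1 hlc (by linarith : (N:ℝ) ≤ (k:ℝ)+1/2)
  have hd0 : 0 < 1/(24*((k:ℝ)+1)^2) := by positivity
  have htak : 0 < t + ak := by linarith
  have hak : ak ≤ Real.log ((k:ℝ)+1) := by
    have h := Real.eulerMascheroniSeq_lt_eulerMascheroniConstant k
    rw [Real.eulerMascheroniSeq] at h
    rw [hakdef]
    linarith
  have hbk : bk ≤ Real.log ((k:ℝ)+1) :=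
    Real.log_le_log (by linarith) (by linarith)
  have htlk1 : 0 < t + Real.log ((k:ℝ)+1) := by linarith
  have eterm : 1 / (t + bk) - 1 / ((harmonic k : ℝ) - Real.eulerMascheroniConstant + t)
      = (ak - bk)/((t+bk)*(t+ak)) := by
    rw [show (harmonic k : ℝ) - Real.eulerMascheroniConstant + t = t + ak by rw [hakdef]; ring]
    field_simp
    ring
  constructor
  · calc (1/24) * ∫ x in ((k:ℝ)+1)..((k:ℝ)+2), gg t x
        ≤ (1/24) * gg t ((k:ℝ)+1) := by
          have h := gg_interval_le hc1 hlc (by linarith : (N:ℝ) ≤ (k:ℝ)+1)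
          rw [show (k:ℝ)+1+1 = (k:ℝ)+2 by ring] at h
          linarith
      _ = (1/(24*((k:ℝ)+1)^2))/((t + Real.log ((k:ℝ)+1))^2) := by
          rw [gg]; field_simp
      _ ≤ (ak - bk)/((t+bk)*(t+ak)) := by
          apply div_le_div₀ (by linarith) hdl (by positivity)
          nlinarith
      _ = 1 / (t + bk) - 1 / ((harmonic k : ℝ) - Real.eulerMascheroniConstant + t) :=
          eterm.symm
  · calc 1 / (t + bk) - 1 / ((harmonic k : ℝ) - Real.eulerMascheroniConstant + t)
        = (ak - bk)/((t+bk)*(t+ak)) := eterm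
      _ ≤ (ak - bk)/((t+bk)*(t+bk)) := by
          apply div_le_div_of_nonneg_left (by linarith) (by positivity)
          nlinarith
      _ ≤ (1/(24*((k:ℝ)+1/2)^2))/((t+bk)*(t+bk)) := by
          apply div_le_div₀ (by positivity) hdu (by positivity) le_rfl
      _ = (1/24) * gg t ((k:ℝ)+1/2) := by
          rw [gg, hbkdef]; field_simp
      _ ≤ (1/24) * ∫ x in (k:ℝ)..((k:ℝ)+1), gg t x := by
          have h := gg_midpoint hc1 hlc hkc
          linarith


noncomputable def tm (t : ℝ) (k : ℕ) : ℝ :=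
  1 / (t + Real.log ((k : ℝ) + 1/2)) -
    1 / ((harmonic k : ℝ) - Real.eulerMascheroniConstant + t)


end Aux

open Real Filter MeasureTheory Finset Topology

lemma eta_eq (N : ℕ) (t : ℝ) (n : ℕ) : eta N t n = ∑ k ∈ Finset.Icc N n, tm t k := rfl

theorem stmt_9 (N : ℕ) (hN : 0 < N) (t : ℝ) (ht : -Real.log N < t)
    (L : ℝ) (hL : Filter.Tendsto (eta N t) Filter.atTop (𝓝 L)) :
    ∀ n : ℕ, N ≤ n →
      (1/24) * (∫ x in Set.Ioi ((n : ℝ) + 1), 1 / (x^2 * (t + Real.log x)^2)) ≤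
        L - eta N t (n - 1) ∧
      L - eta N t (n - 1) ≤
        (1/24) * ∫ x in Set.Ioi (n : ℝ), 1 / (x^2 * (t + Real.log x)^2) := by
  intro n hn
  have hc1 : (1:ℝ) ≤ (N:ℝ) := by exact_mod_cast hN
  have hlc : 0 < t + Real.log N := by linarith
  have hnc : (N:ℝ) ≤ (n:ℝ) := by exact_mod_cast hn
  have hS : ∀ m : ℕ, n ≤ m → eta N t m - eta N t (n-1) = ∑ k ∈ Finset.Icc n m, tm t k := by
    intro m hm
    have hsplit : Finset.Icc N m = Finset.Icc N (n-1) ∪ Finset.Icc n m := by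
      ext a; simp only [Finset.mem_Icc, Finset.mem_union]; omega
    have hdisj : Disjoint (Finset.Icc N (n-1)) (Finset.Icc n m) := by
      rw [Finset.disjoint_left]; intro a ha hb
      simp only [Finset.mem_Icc] at ha hb; omega
    rw [eta_eq, eta_eq, hsplit, Finset.sum_union hdisj]
    ring
  have htendS : Tendsto (fun m => ∑ k ∈ Finset.Icc n m, tm t k) atTop
      (𝓝 (L - eta N t (n-1))) := by
    apply (hL.sub_const (eta N t (n-1))).congr'
    filter_upwards [eventually_ge_atTop n] with m hm
    exact hS m hm
  have hsum_u : ∀ m : ℕ, n ≤ m →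
      ∑ k ∈ Finset.Icc n m, (∫ x in (k:ℝ)..((k:ℝ)+1), gg t x)
        = ∫ x in (n:ℝ)..((m:ℝ)+1), gg t x := by
    intro m hm
    induction m, hm using Nat.le_induction with
    | base => simp
    | succ m hm ih =>
      rw [Finset.sum_Icc_succ_top (by omega : n ≤ m+1), ih]
      have hmn : (n:ℝ) ≤ (m:ℝ) := by exact_mod_cast hm
      have e := intervalIntegral.integral_add_adjacent_intervals
        (gg_intervalIntegrable hc1 hlc hnc (by linarith : (n:ℝ) ≤ (m:ℝ)+1))
        (gg_intervalIntegrable hc1 hlc (by linarith : (N:ℝ) ≤ (m:ℝ)+1)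
          (by linarith : (m:ℝ)+1 ≤ (m:ℝ)+2))
      push_cast
      rw [show (m:ℝ)+1+1 = (m:ℝ)+2 by ring]
      exact e
  have hsum_l : ∀ m : ℕ, n ≤ m →
      ∑ k ∈ Finset.Icc n m, (∫ x in ((k:ℝ)+1)..((k:ℝ)+2), gg t x)
        = ∫ x in ((n:ℝ)+1)..((m:ℝ)+2), gg t x := by
    intro m hm
    induction m, hm using Nat.le_induction with
    | base => simp
    | succ m hm ih =>
      rw [Finset.sum_Icc_succ_top (by omega : n ≤ m+1), ih]
      have hmn : (n:ℝ) ≤ (m:ℝ) := by exact_mod_cast hm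
      have e := intervalIntegral.integral_add_adjacent_intervals
        (gg_intervalIntegrable hc1 hlc (by linarith : (N:ℝ) ≤ (n:ℝ)+1)
          (by linarith : (n:ℝ)+1 ≤ (m:ℝ)+2))
        (gg_intervalIntegrable hc1 hlc (by linarith : (N:ℝ) ≤ (m:ℝ)+2)
          (by linarith : (m:ℝ)+2 ≤ (m:ℝ)+3))
      push_cast
      rw [show (m:ℝ)+1+1 = (m:ℝ)+2 by ring, show (m:ℝ)+1+2 = (m:ℝ)+3 by ring]
      exact e
  have hIoiN : IntegrableOn (gg t) (Set.Ioi (n:ℝ)) := gg_integrableOn hc1 hlc hnc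
  have hIoiN1 : IntegrableOn (gg t) (Set.Ioi ((n:ℝ)+1)) :=
    gg_integrableOn hc1 hlc (by linarith)
  have hup : ∀ m : ℕ, n ≤ m →
      ∑ k ∈ Finset.Icc n m, tm t k ≤ (1/24) * ∫ x in Set.Ioi (n:ℝ), gg t x := by
    intro m hm
    have hmn : (n:ℝ) ≤ (m:ℝ) := by exact_mod_cast hm
    calc ∑ k ∈ Finset.Icc n m, tm t k
        ≤ ∑ k ∈ Finset.Icc n m, (1/24) * ∫ x in (k:ℝ)..((k:ℝ)+1), gg t x := by
          apply Finset.sum_le_sum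
          intro k hk
          have hk' : N ≤ k := le_trans hn (Finset.mem_Icc.mp hk).1
          exact (sandwich hN ht hk').2
      _ = (1/24) * ∑ k ∈ Finset.Icc n m, (∫ x in (k:ℝ)..((k:ℝ)+1), gg t x) := by
          rw [Finset.mul_sum]
      _ = (1/24) * ∫ x in (n:ℝ)..((m:ℝ)+1), gg t x := by rw [hsum_u m hm]
      _ ≤ (1/24) * ∫ x in Set.Ioi (n:ℝ), gg t x := by
          apply mul_le_mul_of_nonneg_left _ (by norm_num)
          rw [intervalIntegral.integral_of_le (by linarith : (n:ℝ) ≤ (m:ℝ)+1)]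
          apply setIntegral_mono_set hIoiN
          · exact Filter.Eventually.of_forall (gg_nonneg t)
          · exact (Set.Ioc_subset_Ioi_self).eventuallyLE
  have hfinal_u : L - eta N t (n-1) ≤ (1/24) * ∫ x in Set.Ioi (n:ℝ), gg t x := by
    apply le_of_tendsto htendS
    filter_upwards [eventually_ge_atTop n] with m hm
    exact hup m hm
  have htendI : Tendsto (fun m : ℕ => (1/24) * ∫ x in ((n:ℝ)+1)..((m:ℝ)+2), gg t x) atTop
      (𝓝 ((1/24) * ∫ x in Set.Ioi ((n:ℝ)+1), gg t x)) := by
    apply Tendsto.const_mul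
    apply intervalIntegral_tendsto_integral_Ioi _ hIoiN1
    exact tendsto_atTop_add_const_right _ _ tendsto_natCast_atTop_atTop
  have hfinal_l : (1/24) * ∫ x in Set.Ioi ((n:ℝ)+1), gg t x ≤ L - eta N t (n-1) := by
    apply le_of_tendsto_of_tendsto htendI htendS
    filter_upwards [eventually_ge_atTop n] with m hm
    calc (1/24) * ∫ x in ((n:ℝ)+1)..((m:ℝ)+2), gg t x
        = (1/24) * ∑ k ∈ Finset.Icc n m, (∫ x in ((k:ℝ)+1)..((k:ℝ)+2), gg t x) := by
          rw [hsum_l m hm]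
      _ = ∑ k ∈ Finset.Icc n m, (1/24) * ∫ x in ((k:ℝ)+1)..((k:ℝ)+2), gg t x := by
          rw [Finset.mul_sum]
      _ ≤ ∑ k ∈ Finset.Icc n m, tm t k := by
          apply Finset.sum_le_sum
          intro k hk
          have hk' : N ≤ k := le_trans hn (Finset.mem_Icc.mp hk).1
          exact (sandwich hN ht hk').1
  exact ⟨hfinal_l, hfinal_u⟩
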